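/- Let $\omega : \{2^{-j} : j \ge 0\} \to (0,\infty)$ be non-decreasing in the sense that $\omega(2^{-j-1}) \le \omega(2^{-j})$ for all $j \ge 0$. Define $(W_1\omega)(2^{-j}) = \sum_{0 \le k \le j} 2^{-2(j-k)}\omega(2^{-k})$ and $(W_2\omega)(2^{-j}) = \sum_{0 \le k \le j} 2^{-(j-k)}\omega(2^{-k}) + \sum_{k > j}\omega(2^{-k})$ (the latter possibly infinite). Then $(W_2 W_1 \omega)(2^{-j}) \le 4 (W_2\omega)(2^{-j})$ for all $j \ge 0$. -/

import Mathlib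

open scoped ENNReal

/-- `(W₁ω)(2^{-j}) = ∑_{0 ≤ k ≤ j} 2^{-2(j-k)} ω(2^{-k})`, with `ω j` standing for `ω(2^{-j})`. -/
noncomputable def W1 (ω : ℕ → ℝ≥0∞) (j : ℕ) : ℝ≥0∞ :=
  ∑ k ∈ Finset.range (j + 1), (2⁻¹ : ℝ≥0∞) ^ (2 * (j - k)) * ω k

/-- `(W₂ω)(2^{-j}) = ∑_{0 ≤ k ≤ j} 2^{-(j-k)} ω(2^{-k}) + ∑_{k > j} ω(2^{-k})`,
with `ω j` standing for `ω(2^{-j})`; the tail sum is taken in the extended reals. -/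
noncomputable def W2 (ω : ℕ → ℝ≥0∞) (j : ℕ) : ℝ≥0∞ :=
  ∑ k ∈ Finset.range (j + 1), (2⁻¹ : ℝ≥0∞) ^ (j - k) * ω k + ∑' k : ℕ, ω (j + 1 + k)

lemma geom_half : ∑' n : ℕ, (2⁻¹ : ℝ≥0∞) ^ n = 2 := by
  rw [ENNReal.tsum_geometric, ENNReal.one_sub_inv_two, inv_inv]

lemma geom_half_finset (n : ℕ) : ∑ d ∈ Finset.range n, (2⁻¹ : ℝ≥0∞) ^ d ≤ 2 := by
  exact le_trans (ENNReal.sum_le_tsum _) geom_half.le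

lemma half_le_one : (2⁻¹ : ℝ≥0∞) ≤ 1 := by
  simp [ENNReal.inv_le_one]

/-- If `ω` is positive, finite and non-decreasing (as a function of `2^{-j}`), then
`W₂W₁ω ≤ 4 W₂ω`. -/
theorem W2_W1_le_four_W2 (ω : ℕ → ℝ≥0∞) (hpos : ∀ j, 0 < ω j) (hfin : ∀ j, ω j < ⊤)
    (hmono : ∀ j, ω (j + 1) ≤ ω j) (j : ℕ) :
    W2 (W1 ω) j ≤ 4 * W2 ω j := by
  classical
  set S : ℝ≥0∞ := ∑ k ∈ Finset.range (j + 1), (2⁻¹ : ℝ≥0∞) ^ (j - k) * ω k with hS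
  set T : ℝ≥0∞ := ∑' k : ℕ, ω (j + 1 + k) with hT
  -- Part A : the finite part
  have hA : ∑ k ∈ Finset.range (j + 1), (2⁻¹ : ℝ≥0∞) ^ (j - k) * W1 ω k ≤ 2 * S := by
    have swap : ∀ f : ℕ → ℕ → ℝ≥0∞,
        ∑ k ∈ Finset.range (j + 1), ∑ i ∈ Finset.range (k + 1), f i k
          = ∑ i ∈ Finset.range (j + 1), ∑ k ∈ Finset.Ico i (j + 1), f i k := by
      intro f
      simpa [Nat.Ico_zero_eq_range] using (Finset.sum_Ico_Ico_comm 0 (j + 1) f).symm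
    calc ∑ k ∈ Finset.range (j + 1), (2⁻¹ : ℝ≥0∞) ^ (j - k) * W1 ω k
        = ∑ k ∈ Finset.range (j + 1), ∑ i ∈ Finset.range (k + 1),
            (2⁻¹ : ℝ≥0∞) ^ ((j - i) + (k - i)) * ω i := by
          refine Finset.sum_congr rfl fun k hk => ?_
          rw [W1, Finset.mul_sum]
          refine Finset.sum_congr rfl fun i hi => ?_
          rw [← mul_assoc, ← pow_add]
          have hk' := Finset.mem_range.mp hk
          have hi' := Finset.mem_range.mp hi
          congr 2
          omega
      _ = ∑ i ∈ Finset.range (j + 1), ∑ k ∈ Finset.Ico i (j + 1),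
            (2⁻¹ : ℝ≥0∞) ^ ((j - i) + (k - i)) * ω i := swap _
      _ ≤ ∑ i ∈ Finset.range (j + 1), 2 * ((2⁻¹ : ℝ≥0∞) ^ (j - i) * ω i) := by
          refine Finset.sum_le_sum fun i _ => ?_
          have : ∑ k ∈ Finset.Ico i (j + 1), (2⁻¹ : ℝ≥0∞) ^ ((j - i) + (k - i)) * ω i
              = (∑ k ∈ Finset.Ico i (j + 1), (2⁻¹ : ℝ≥0∞) ^ (k - i))
                  * ((2⁻¹ : ℝ≥0∞) ^ (j - i) * ω i) := by
            rw [Finset.sum_mul]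
            refine Finset.sum_congr rfl fun k _ => ?_
            rw [pow_add]; ring
          rw [this]
          refine mul_le_mul_left ?_ _
          rw [Finset.sum_Ico_eq_sum_range]
          calc ∑ d ∈ Finset.range (j + 1 - i), (2⁻¹ : ℝ≥0∞) ^ (i + d - i)
              = ∑ d ∈ Finset.range (j + 1 - i), (2⁻¹ : ℝ≥0∞) ^ d := by
                refine Finset.sum_congr rfl fun d _ => ?_
                congr 1
                omega
            _ ≤ 2 := geom_half_finset _
      _ = 2 * S := by rw [hS, Finset.mul_sum]
  -- Part B : the tail
  have hB : ∑' m : ℕ, W1 ω (j + 1 + m) ≤ S + 2 * T := by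
    have hsplit : ∀ m : ℕ, W1 ω (j + 1 + m)
        = (∑ i ∈ Finset.range (j + 1), (2⁻¹ : ℝ≥0∞) ^ (2 * (j + 1 + m - i)) * ω i)
          + ∑ r ∈ Finset.range (m + 1), (2⁻¹ : ℝ≥0∞) ^ (2 * (m - r)) * ω (j + 1 + r) := by
      intro m
      rw [W1]
      have h1 : j + 1 + m + 1 = (j + 1) + (m + 1) := by omega
      rw [h1, Finset.sum_range_add]
      congr 1
      refine Finset.sum_congr rfl fun r _ => ?_
      congr 2
      omega
    calc ∑' m : ℕ, W1 ω (j + 1 + m)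
        = (∑' m : ℕ, ∑ i ∈ Finset.range (j + 1),
              (2⁻¹ : ℝ≥0∞) ^ (2 * (j + 1 + m - i)) * ω i)
          + ∑' m : ℕ, ∑ r ∈ Finset.range (m + 1),
              (2⁻¹ : ℝ≥0∞) ^ (2 * (m - r)) * ω (j + 1 + r) := by
          rw [← ENNReal.tsum_add]
          exact tsum_congr hsplit
      _ ≤ S + 2 * T := by
          refine add_le_add ?_ ?_
          · -- head part
            have hP : ∀ m : ℕ, ∑ i ∈ Finset.range (j + 1),
                (2⁻¹ : ℝ≥0∞) ^ (2 * (j + 1 + m - i)) * ω i ≤ (2⁻¹ : ℝ≥0∞) ^ (m + 1) * S := by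
              intro m
              rw [hS, Finset.mul_sum]
              refine Finset.sum_le_sum fun i hi => ?_
              have hi' := Finset.mem_range.mp hi
              rw [← mul_assoc, ← pow_add]
              refine mul_le_mul_left ?_ _
              refine pow_le_pow_of_le_one (by simp) half_le_one ?_
              omega
            calc ∑' m : ℕ, ∑ i ∈ Finset.range (j + 1),
                  (2⁻¹ : ℝ≥0∞) ^ (2 * (j + 1 + m - i)) * ω i
                ≤ ∑' m : ℕ, (2⁻¹ : ℝ≥0∞) ^ (m + 1) * S := ENNReal.tsum_le_tsum hP
              _ = (∑' m : ℕ, (2⁻¹ : ℝ≥0∞) ^ (m + 1)) * S := ENNReal.tsum_mul_right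
              _ = S := by
                  have : ∑' m : ℕ, (2⁻¹ : ℝ≥0∞) ^ (m + 1)
                      = (∑' m : ℕ, (2⁻¹ : ℝ≥0∞) ^ m) * 2⁻¹ := by
                    rw [← ENNReal.tsum_mul_right]
                    exact tsum_congr fun m => by rw [pow_succ]
                  rw [this, geom_half]
                  simp [ENNReal.mul_inv_cancel]
          · -- tail part, with the triangle swap in the tsum
            have hQ : ∀ m : ℕ, ∑ r ∈ Finset.range (m + 1),
                (2⁻¹ : ℝ≥0∞) ^ (2 * (m - r)) * ω (j + 1 + r)
                = ∑' r : ℕ, (if r ≤ m then (2⁻¹ : ℝ≥0∞) ^ (2 * (m - r)) * ω (j + 1 + r)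
                    else 0) := by
              intro m
              rw [tsum_eq_sum (s := Finset.range (m + 1))
                (fun r hr => by
                  rw [if_neg]
                  intro h
                  exact hr (Finset.mem_range.mpr (by omega)))]
              refine Finset.sum_congr rfl fun r hr => ?_
              rw [if_pos (Nat.lt_succ_iff.mp (Finset.mem_range.mp hr))]
            calc ∑' m : ℕ, ∑ r ∈ Finset.range (m + 1),
                  (2⁻¹ : ℝ≥0∞) ^ (2 * (m - r)) * ω (j + 1 + r)
                = ∑' r : ℕ, ∑' m : ℕ, (if r ≤ m then
                    (2⁻¹ : ℝ≥0∞) ^ (2 * (m - r)) * ω (j + 1 + r) else 0) := by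
                  rw [← ENNReal.tsum_comm]
                  exact tsum_congr hQ
              _ ≤ ∑' r : ℕ, 2 * ω (j + 1 + r) := by
                  refine ENNReal.tsum_le_tsum fun r => ?_
                  set f : ℕ → ℝ≥0∞ := fun m => if r ≤ m then
                    (2⁻¹ : ℝ≥0∞) ^ (2 * (m - r)) * ω (j + 1 + r) else 0 with hf
                  have hshift : ∑' m : ℕ, f m = ∑' d : ℕ, f (d + r) := by
                    rw [← Summable.sum_add_tsum_nat_add' (f := f) (k := r) ENNReal.summable]
                    have : ∑ m ∈ Finset.range r, f m = 0 := by
                      refine Finset.sum_eq_zero fun m hm => ?_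
                      rw [hf]
                      exact if_neg (Nat.not_le.mpr (Finset.mem_range.mp hm))
                    rw [this, zero_add]
                  rw [hshift]
                  calc ∑' d : ℕ, f (d + r)
                      ≤ ∑' d : ℕ, (2⁻¹ : ℝ≥0∞) ^ d * ω (j + 1 + r) := by
                        refine ENNReal.tsum_le_tsum fun d => ?_
                        rw [hf]
                        simp only [le_add_iff_nonneg_left, zero_le, if_true, Nat.add_sub_cancel]
                        refine mul_le_mul_left ?_ _
                        exact pow_le_pow_of_le_one (by simp) half_le_one (by omega)
                    _ = 2 * ω (j + 1 + r) := by rw [ENNReal.tsum_mul_right, geom_half]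
              _ = 2 * T := by rw [hT, ENNReal.tsum_mul_left]
  -- assemble
  have : W2 (W1 ω) j ≤ 2 * S + (S + 2 * T) := by
    rw [W2]
    exact add_le_add hA hB
  refine this.trans ?_
  have h4 : 4 * W2 ω j = 4 * S + 4 * T := by rw [W2, mul_add]
  rw [h4]
  calc 2 * S + (S + 2 * T) = 3 * S + 2 * T := by ring
    _ ≤ 4 * S + 4 * T := by
        gcongr <;> norm_num
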